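/- arXiv:2101.06527 — 7 statements merged into one kernel-verified Lean document; each statement's English description precedes it below -/
import Mathlib

section
/- Let A be a multiring. Then every maximal ideal of A is a prime ideal. -/
universe u v

/-- A multiring: a commutative monoid with a multivalued addition. -/
class Multiring (A : Type u) extends CommMonoid A, Zero A, Neg A where
  /-- the multivalued sum: `madd b c` is the set `b + c` -/
  madd : A → A → Set A
  madd_nonempty : ∀ a b : A, (madd a b).Nonempty
  madd_rev_left : ∀ a b c : A, a ∈ madd b c → c ∈ madd (-b) a
  madd_rev_right : ∀ a b c : A, a ∈ madd b c → b ∈ madd a (-c)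
  mem_madd_zero : ∀ a b : A, a ∈ madd b 0 ↔ a = b
  madd_assoc : ∀ a b c g x : A, g ∈ madd a b → x ∈ madd g c →
    ∃ h ∈ madd b c, x ∈ madd a h
  madd_comm : ∀ a b : A, madd a b = madd b a
  mul_zero' : ∀ a : A, a * 0 = 0
  madd_mul : ∀ a b c d : A, a ∈ madd b c → a * d ∈ madd (b * d) (c * d)

namespace Multiring

variable {A : Type u} [Multiring A]

/-- the iterated multivalued sum `x₁ + ⋯ + xₙ = {x₁} + (x₂ + ⋯ + xₙ)` of a list -/
def listSum : List A → Set A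
  | [] => {(0 : A)}
  | a :: l => {x : A | ∃ y ∈ listSum l, x ∈ madd a y}

/-- an ideal of a multiring: a nonempty subset with `I + I ⊆ I` and `A·I ⊆ I` -/
def IsIdeal (I : Set A) : Prop :=
  I.Nonempty ∧ (∀ a ∈ I, ∀ b ∈ I, madd a b ⊆ I) ∧ ∀ a : A, ∀ b ∈ I, a * b ∈ I

/-- a prime ideal: a proper ideal such that `a*b ∈ p → a ∈ p ∨ b ∈ p` -/
def IsPrimeIdeal (I : Set A) : Prop :=
  IsIdeal I ∧ (1 : A) ∉ I ∧ ∀ a b : A, a * b ∈ I → a ∈ I ∨ b ∈ I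

/-- a maximal ideal: a proper ideal maximal among proper ideals -/
def IsMaximalIdeal (I : Set A) : Prop :=
  IsIdeal I ∧ (1 : A) ∉ I ∧ ∀ J : Set A, IsIdeal J → (1 : A) ∉ J → I ⊆ J → J = I

/-- a multiplicative subset -/
def IsMultiplicative (S : Set A) : Prop :=
  (1 : A) ∈ S ∧ ∀ s ∈ S, ∀ t ∈ S, s * t ∈ S

/-- a hyperring: a multiring with the strong distributivity property -/
def IsHyperring (A : Type u) [Multiring A] : Prop :=
  ∀ x b c d : A, x ∈ madd (b * d) (c * d) → ∃ a ∈ madd b c, x = a * d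

/-- a von Neumann (regular) hyperring -/
def IsVonNeumann (A : Type u) [Multiring A] : Prop :=
  IsHyperring A ∧ ∀ a : A, ∃ b : A, a = a * a * b

/-- the equivalence modulo an ideal `I`: `a ∼_I b` iff `(a + (-b)) ∩ I ≠ ∅`;
this is equality of classes in the quotient multiring `A/I`. -/
def simI (I : Set A) (a b : A) : Prop := ∃ x ∈ madd a (-b), x ∈ I

/-- membership of classes in the multivalued sum of the quotient `A/I`:
`[a] ∈ [b] + [c]` iff `a ∈ b + c + i` for some `i ∈ I`. -/
def qmemI (I : Set A) (a b c : A) : Prop := ∃ i ∈ I, ∃ w ∈ madd c i, a ∈ madd b w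

/-- representatives `x` with `[x] ∈ [c₁] + ⋯ + [cₙ]` in the quotient `A/I` -/
def qlistSumI (I : Set A) : List A → Set A
  | [] => {x : A | simI I x 0}
  | c :: l => {x : A | ∃ y ∈ qlistSumI I l, qmemI I x c y}

/-- the quotient multiring `A/I` is a multifield: `1 ≠ 0` and every nonzero
element is weak-invertible -/
def QuotIsMultifield (I : Set A) : Prop :=
  ¬ simI I 1 0 ∧
    ∀ a : A, ¬ simI I a 0 →
      ∃ l : List A, l ≠ [] ∧ (1 : A) ∈ qlistSumI I (l.map fun b => a * b)

/-- the quotient multiring `A/I` is a hyperfield: `1 ≠ 0` and every nonzero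
element is invertible -/
def QuotIsHyperfield (I : Set A) : Prop :=
  ¬ simI I 1 0 ∧ ∀ a : A, ¬ simI I a 0 → ∃ b : A, simI I (a * b) 1

/-- the Marshall equivalence associated to a multiplicative set `S`:
`a ∼_S b` iff `as = bt` for some `s,t ∈ S`; this is equality of classes in the
Marshall quotient `A/ₘS`. -/
def simM (S : Set A) (a b : A) : Prop := ∃ s ∈ S, ∃ t ∈ S, a * s = b * t

/-- `S̄ = {x : xs ∈ S for some s ∈ S}` -/
def mbar (S : Set A) : Set A := {x : A | ∃ s ∈ S, x * s ∈ S}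

/-- membership of classes in the multivalued sum of the Marshall quotient `A/ₘS`:
`[a] ∈ [b] + [c]` iff `as ∈ bt + cu` for some `s,t,u ∈ S`. -/
def qmemM (S : Set A) (a b c : A) : Prop :=
  ∃ s ∈ S, ∃ t ∈ S, ∃ u ∈ S, a * s ∈ madd (b * t) (c * u)

/-- representatives `x` with `[x] ∈ [c₁] + ⋯ + [cₙ]` in the Marshall quotient `A/ₘS` -/
def qlistSumM (S : Set A) : List A → Set A
  | [] => {x : A | simM S x 0}
  | c :: l => {x : A | ∃ y ∈ qlistSumM S l, qmemM S x c y}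

/-- the multivalued sum of the hyperfield `3 = {-1, 0, 1}` -/
def signAdd : SignType → SignType → Set SignType
  | SignType.zero, x => {x}
  | x, SignType.zero => {x}
  | SignType.pos, SignType.pos => {SignType.pos}
  | SignType.neg, SignType.neg => {SignType.neg}
  | _, _ => Set.univ

/-- a multiring morphism `A → 3`, i.e. an order of `A` -/
def IsSignMorphism (σ : A → SignType) : Prop :=
  (∀ a b c : A, a ∈ madd b c → σ a ∈ signAdd (σ b) (σ c)) ∧
  (∀ a b : A, σ (a * b) = σ a * σ b) ∧
  (∀ a : A, σ (-a) = -(σ a)) ∧ σ 0 = 0 ∧ σ 1 = 1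

/-- a prime cone of a multiring -/
def IsPrimeCone (P : Set A) : Prop :=
  (∀ a : A, a * a ∈ P) ∧ (∀ a ∈ P, ∀ b ∈ P, madd a b ⊆ P) ∧
  (∀ a ∈ P, ∀ b ∈ P, a * b ∈ P) ∧ (∀ a : A, a ∈ P ∨ -a ∈ P) ∧
  IsPrimeIdeal {x : A | x ∈ P ∧ -x ∈ P}

open Classical in
/-- the map `σ_P : A → 3` associated to a prime cone `P` -/
noncomputable def sigmaOf (P : Set A) (a : A) : SignType :=
  if a ∈ P ∧ -a ∈ P then 0 else if a ∈ P then 1 else -1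

/-- `ΣA²`: the set of elements lying in some finite sum of squares -/
def SumsOfSquares (A : Type u) [Multiring A] : Set A :=
  {x : A | ∃ l : List A, l ≠ [] ∧ x ∈ listSum (l.map fun a => a * a)}

/-- a multiring is semi-real when `-1 ∉ ΣA²` -/
def IsSemiReal (A : Type u) [Multiring A] : Prop := (-(1 : A)) ∉ SumsOfSquares A

/-- a real reduced multiring -/
def IsRealReduced (A : Type u) [Multiring A] : Prop :=
  IsSemiReal A ∧ (∀ a : A, a * a * a = a) ∧
  (∀ a b : A, madd a (a * b * b) = {a}) ∧
  (∀ a b : A, ∃ c : A, madd (a * a) (b * b) = {c})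

/-- a hyperfield: a hyperring with `1 ≠ 0` and all nonzero elements invertible -/
def IsHyperfield (A : Type u) [Multiring A] : Prop :=
  IsHyperring A ∧ (1 : A) ≠ 0 ∧ ∀ a : A, a ≠ 0 → ∃ b : A, a * b = 1

/-- a morphism of multirings -/
def IsMorphism {B : Type v} [Multiring B] (f : A → B) : Prop :=
  (∀ a b c : A, a ∈ madd b c → f a ∈ madd (f b) (f c)) ∧
  (∀ a b : A, f (a * b) = f a * f b) ∧
  (∀ a : A, f (-a) = -(f a)) ∧ f 0 = 0 ∧ f 1 = 1

/-- the radical `√α = {x : xⁿ ∈ α for some n ≥ 1}` of an ideal -/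
def radical (α : Set A) : Set A := {x : A | ∃ n : ℕ, 1 ≤ n ∧ x ^ n ∈ α}

/-- the ideal `(x) = ∪ {t₁x + ⋯ + tₙx}` generated by `x` -/
def genIdeal (x : A) : Set A :=
  {y : A | ∃ l : List A, l ≠ [] ∧ y ∈ listSum (l.map fun t => t * x)}

/-- `S_a = {x : aⁿ ∈ (x) for some n ≥ 0}` -/
def Sgen (a : A) : Set A := {x : A | ∃ n : ℕ, a ^ n ∈ genIdeal x}

/-- `a` is weak-invertible when `1 ∈ ab₁ + ⋯ + abₙ` for some `b₁,…,bₙ` -/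
def WeakInvertible (a : A) : Prop :=
  ∃ l : List A, l ≠ [] ∧ (1 : A) ∈ listSum (l.map fun b => a * b)

/-- the prime spectrum of a multiring -/
abbrev Spec (A : Type u) [Multiring A] : Type u := {p : Set A // IsPrimeIdeal p}

/-- the spectral topology on `spec A`, generated by the sets `D(a) = {p : a ∉ p}` -/
instance : TopologicalSpace (Spec A) :=
  TopologicalSpace.generateFrom {U : Set (Spec A) | ∃ a : A, U = {p : Spec A | a ∉ p.1}}

/-- the Marshall quotient `A/ₘS` is a real reduced multiring (expressed on
representatives) -/
def QuotIsRealReduced (S : Set A) : Prop :=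
  (∀ l : List A, l ≠ [] → (-(1 : A)) ∉ qlistSumM S (l.map fun a => a * a)) ∧
  (∀ a : A, simM S (a * a * a) a) ∧
  (∀ a b x : A, qmemM S x a (a * b * b) ↔ simM S x a) ∧
  (∀ a b : A, ∃ c : A, ∀ x : A, qmemM S x (a * a) (b * b) ↔ simM S x c)

/-- the Marshall quotient `A/ₘS` is a geometric von Neumann hyperring
(expressed on representatives): it is a hyperring, von Neumann regular, and
`e + eᶜ = {1}` for every idempotent `e` -/
def QuotGeometricVN (S : Set A) : Prop :=
  (∀ x b c d : A, qmemM S x (b * d) (c * d) → ∃ a : A, qmemM S a b c ∧ simM S x (a * d)) ∧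
  (∀ a : A, ∃ b : A, simM S a (a * a * b)) ∧
  (∀ e x : A, simM S (e * e) e → qmemM S x 1 (-e) → simM S (e * x) 0 →
    ∀ y : A, qmemM S y e x ↔ simM S y 1)

/-- a von Neumann subgroup: a multiplicative set such that for every idempotent
`a` (with complement `aᶜ`) and every `x ∈ D_S(a, aᶜ)` there is `s ∈ S` with `xs ∈ S` -/
def IsVNSubgroup (S : Set A) : Prop :=
  IsMultiplicative S ∧
    ∀ a x ac : A, a * a = a → ac ∈ madd 1 (-a) → a * ac = 0 →
      (∃ u ∈ S, ∃ v ∈ S, ∃ w ∈ S, x * u ∈ madd (a * v) (ac * w)) →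
      ∃ s ∈ S, x * s ∈ S

/-- a preorder of a multiring -/
def IsPreorderSet (T : Set A) : Prop :=
  (∀ a : A, a * a ∈ T) ∧ (∀ a ∈ T, ∀ b ∈ T, a * b ∈ T) ∧ (∀ a ∈ T, ∀ b ∈ T, madd a b ⊆ T)

/-- `1 + T = ∪ {1 + t : t ∈ T}` -/
def oneAdd (T : Set A) : Set A := {x : A | ∃ t ∈ T, x ∈ madd 1 t}

/-- `ΣḞ²`: elements lying in some finite sum of squares of nonzero elements -/
def sumSqNonzero (A : Type u) [Multiring A] : Set A :=
  {x : A | ∃ l : List A, l ≠ [] ∧ (∀ a ∈ l, a ≠ 0) ∧ x ∈ listSum (l.map fun a => a * a)}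

end Multiring

open Multiring in
lemma aux_listSum_append {A : Type u} [Multiring A] :
    ∀ (l₁ : List A) {l₂ : List A} {u v x : A}, u ∈ listSum l₁ → v ∈ listSum l₂ →
      x ∈ madd u v → x ∈ listSum (l₁ ++ l₂)
  | [], l₂, u, v, x, hu, hv, hx => by
      simp only [listSum, Set.mem_singleton_iff] at hu
      subst hu
      rw [madd_comm] at hx
      rw [(mem_madd_zero x v).mp hx]
      simpa using hv
  | c :: l, l₂, u, v, x, hu, hv, hx => by
      obtain ⟨y, hy, huy⟩ := hu
      obtain ⟨h, hh, hxh⟩ := madd_assoc c y v u x huy hx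
      exact ⟨h, aux_listSum_append l hy hv hh, hxh⟩

open Multiring in
lemma aux_listSum_mul {A : Type u} [Multiring A] :
    ∀ (l : List A) {u : A} (d : A), u ∈ listSum l → u * d ∈ listSum (l.map (· * d))
  | [], u, d, hu => by
      simp only [listSum, Set.mem_singleton_iff] at hu
      subst hu
      simp only [List.map_nil, listSum, Set.mem_singleton_iff]
      rw [mul_comm, Multiring.mul_zero']
  | c :: l, u, d, hu => by
      obtain ⟨y, hy, huy⟩ := hu
      exact ⟨y * d, aux_listSum_mul l d hy, madd_mul u c y d huy⟩

open Multiring in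
lemma aux_listSum_sub {A : Type u} [Multiring A] {I : Set A} (hI : IsIdeal I) :
    ∀ (l : List A), (∀ y ∈ l, y ∈ I) → listSum l ⊆ I
  | [], _ => by
      intro x hx
      simp only [listSum, Set.mem_singleton_iff] at hx
      subst hx
      obtain ⟨i, hi⟩ := hI.1
      have := hI.2.2 0 i hi
      rwa [mul_comm, Multiring.mul_zero'] at this
  | c :: l, hl => by
      rintro x ⟨y, hy, hxy⟩
      have hyI : y ∈ I := aux_listSum_sub hI l (fun z hz => hl z (List.mem_cons_of_mem _ hz)) hy
      exact hI.2.1 c (hl c List.mem_cons_self) y hyI hxy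

open Multiring in
lemma aux_self_mem_listSum {A : Type u} [Multiring A] (a : A) : a ∈ listSum [a] :=
  ⟨0, rfl, (mem_madd_zero a a).mpr rfl⟩

/-- Every maximal ideal of a multiring is a prime ideal. -/
theorem maximalIdeal_isPrimeIdeal {A : Type u} [Multiring A] (I : Set A)
    (hI : Multiring.IsMaximalIdeal I) : Multiring.IsPrimeIdeal I := by
  open Multiring in
  obtain ⟨hid, hone, hmax⟩ := hI
  refine ⟨hid, hone, fun a b hab => ?_⟩
  by_contra hcon
  push_neg at hcon
  obtain ⟨haI, hbI⟩ := hcon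
  -- the ideal generated by I and a
  set J : Set A := {x : A | ∃ l : List A, (∀ y ∈ l, y ∈ I ∨ ∃ t : A, y = t * a) ∧
      x ∈ listSum l} with hJ
  have hIJ : I ⊆ J := fun i hi => ⟨[i], by simp [hi], aux_self_mem_listSum i⟩
  have haJ : a ∈ J := ⟨[a], by
    intro y hy
    simp only [List.mem_singleton] at hy
    rw [hy]
    exact Or.inr ⟨1, (one_mul a).symm⟩, aux_self_mem_listSum a⟩
  have hJid : Multiring.IsIdeal J := by
    refine ⟨⟨a, haJ⟩, ?_, ?_⟩
    · rintro u ⟨l₁, hl₁, hu⟩ v ⟨l₂, hl₂, hv⟩ x hx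
      exact ⟨l₁ ++ l₂, fun y hy => by
        rcases List.mem_append.mp hy with h | h
        exacts [hl₁ y h, hl₂ y h], aux_listSum_append l₁ hu hv hx⟩
    · rintro c u ⟨l, hl, hu⟩
      refine ⟨l.map (· * c), ?_, by rw [mul_comm]; exact aux_listSum_mul l c hu⟩
      intro y hy
      obtain ⟨z, hz, rfl⟩ := List.mem_map.mp hy
      rcases hl z hz with h | ⟨t, rfl⟩
      · exact Or.inl (by rw [mul_comm]; exact hid.2.2 c z h)
      · exact Or.inr ⟨t * c, by rw [mul_right_comm]⟩
  have honeJ : (1 : A) ∈ J := by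
    by_contra h1J
    exact haI (hmax J hJid h1J hIJ ▸ haJ)
  -- multiply the witness list by b
  obtain ⟨l, hl, h1⟩ := honeJ
  have hbmem : b ∈ Multiring.listSum (l.map (· * b)) := by
    have := aux_listSum_mul l b h1
    rwa [one_mul] at this
  have : Multiring.listSum (l.map (· * b)) ⊆ I := by
    refine aux_listSum_sub hid _ ?_
    intro y hy
    obtain ⟨z, hz, rfl⟩ := List.mem_map.mp hy
    rcases hl z hz with h | ⟨t, rfl⟩
    · rw [mul_comm]; exact hid.2.2 b z h
    · rw [mul_assoc]
      exact hid.2.2 t _ hab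
  exact hbI (this hbmem)
end

section
/- (Prime Ideal Theorem) Let A be a multiring, I ⊆ A an ideal and S ⊆ A a multiplicative set with I ∩ S = ∅. Then there exists a prime ideal p of A with I ⊆ p and p ∩ S = ∅. -/
universe u v

namespace Multiring

variable {A : Type u} [Multiring A]

lemma ideal_zero_mem {J : Set A} (hJ : IsIdeal J) : (0 : A) ∈ J := by
  obtain ⟨⟨b, hb⟩, _, hmul⟩ := hJ
  have := hmul 0 b hb
  rwa [mul_comm, mul_zero'] at this

lemma listSum_subset_ideal {J : Set A} (hJ : IsIdeal J) :
    ∀ l : List A, (∀ x ∈ l, x ∈ J) → listSum l ⊆ J := by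
  intro l
  induction l with
  | nil => intro _ x hx; simp [listSum] at hx; simpa [hx] using ideal_zero_mem hJ
  | cons a t ih =>
      intro h x hx
      obtain ⟨y, hy, hxy⟩ := hx
      exact hJ.2.1 a (h a (by simp)) y (ih (fun z hz => h z (by simp [hz])) hy) hxy

lemma mul_listSum : ∀ (l : List A) (y c : A), y ∈ listSum l →
    y * c ∈ listSum (l.map (· * c)) := by
  intro l
  induction l with
  | nil => intro y c hy; simp [listSum] at hy ⊢; rw [hy, mul_comm, mul_zero']
  | cons a t ih =>
      intro y c hy
      obtain ⟨z, hz, hyz⟩ := hy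
      exact ⟨z * c, ih z c hz, madd_mul y a z c hyz⟩

lemma rot1 {x a h b c : A} (hx : x ∈ madd a h) (hh : h ∈ madd b c) :
    ∃ k ∈ madd c a, x ∈ madd b k := by
  rw [madd_comm] at hx
  exact madd_assoc b c a h x hh hx

lemma add_four {z x x' j₁ y₁ j₂ y₂ : A} (hz : z ∈ madd x x')
    (hx : x ∈ madd j₁ y₁) (hx' : x' ∈ madd j₂ y₂) :
    ∃ j ∈ madd j₁ j₂, ∃ y ∈ madd y₁ y₂, z ∈ madd j y := by
  obtain ⟨h, hh, hz1⟩ := madd_assoc j₁ y₁ x' x z hx hz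
  rw [madd_comm] at hh
  obtain ⟨k, hk, hh2⟩ := madd_assoc j₂ y₂ y₁ x' h hx' hh
  obtain ⟨m, hm, hz2⟩ := rot1 hz1 hh2
  obtain ⟨n, hn, hz3⟩ := rot1 hz2 hm
  rw [madd_comm] at hz3 hk
  exact ⟨n, hn, k, hk, hz3⟩

lemma listSum_append : ∀ (l₁ l₂ : List A) (y₁ y₂ y : A),
    y₁ ∈ listSum l₁ → y₂ ∈ listSum l₂ → y ∈ madd y₁ y₂ →
    y ∈ listSum (l₁ ++ l₂) := by
  intro l₁
  induction l₁ with
  | nil =>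
      intro l₂ y₁ y₂ y h1 h2 hy
      simp [listSum] at h1
      subst h1
      rw [madd_comm, mem_madd_zero] at hy
      simpa [hy] using h2
  | cons a t ih =>
      intro l₂ y₁ y₂ y h1 h2 hy
      obtain ⟨w, hw, h1'⟩ := h1
      obtain ⟨h, hh, hy'⟩ := madd_assoc a w y₂ y₁ y h1' hy
      exact ⟨h, ih l₂ w y₂ h hw h2 hh, hy'⟩

/-- the ideal generated by an ideal `J` and an element `a` -/
def extIdeal (J : Set A) (a : A) : Set A :=
  {x : A | ∃ j ∈ J, ∃ l : List A, ∃ y ∈ listSum (l.map (· * a)), x ∈ madd j y}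

lemma subset_extIdeal {J : Set A} (a : A) : J ⊆ extIdeal J a := by
  intro x hx
  exact ⟨x, hx, [], 0, by simp [listSum], (mem_madd_zero x x).mpr rfl⟩

lemma mem_extIdeal_self {J : Set A} (hJ : IsIdeal J) (a : A) : a ∈ extIdeal J a := by
  refine ⟨0, ideal_zero_mem hJ, [1], a, ?_, ?_⟩
  · exact ⟨0, by simp [listSum], by show a ∈ madd (1 * a) 0; rw [one_mul]; exact (mem_madd_zero a a).mpr rfl⟩
  · rw [madd_comm]; exact (mem_madd_zero a a).mpr rfl

lemma extIdeal_isIdeal {J : Set A} (hJ : IsIdeal J) (a : A) : IsIdeal (extIdeal J a) := by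
  refine ⟨⟨a, mem_extIdeal_self hJ a⟩, ?_, ?_⟩
  · rintro x ⟨j₁, hj₁, l₁, y₁, hy₁, hx⟩ x' ⟨j₂, hj₂, l₂, y₂, hy₂, hx'⟩ z hz
    obtain ⟨j, hj, y, hy, hz'⟩ := add_four hz hx hx'
    refine ⟨j, hJ.2.1 j₁ hj₁ j₂ hj₂ hj, l₁ ++ l₂, y, ?_, hz'⟩
    rw [List.map_append]
    exact listSum_append _ _ y₁ y₂ y hy₁ hy₂ hy
  · rintro c x ⟨j, hj, l, y, hy, hx⟩
    refine ⟨c * j, hJ.2.2 c j hj, l.map (· * c), y * c, ?_, ?_⟩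
    · have := mul_listSum (l.map (· * a)) y c hy
      rw [List.map_map] at this ⊢
      have heq : ((· * c) ∘ (· * a) : A → A) = ((· * a) ∘ (· * c)) := by
        funext t; simp [Function.comp, mul_right_comm]
      rwa [heq] at this
    · have := madd_mul x j y c hx
      rwa [mul_comm x c, mul_comm j c] at this

/-- multiplying an element of `extIdeal J a` by something that makes
`a` land in `J` gives an element of `J` -/
lemma extIdeal_mul_mem {J : Set A} (hJ : IsIdeal J) {a s : A}
    (hs : s ∈ extIdeal J a) {c : A} (hca : c * a ∈ J) : s * c ∈ J := by
  obtain ⟨j, hj, l, y, hy, hsj⟩ := hs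
  have h1 : s * c ∈ madd (j * c) (y * c) := madd_mul s j y c hsj
  have h2 : y * c ∈ listSum ((l.map (· * a)).map (· * c)) := mul_listSum _ y c hy
  have h3 : y * c ∈ J := by
    refine listSum_subset_ideal hJ _ ?_ h2
    intro x hx
    rw [List.map_map] at hx
    obtain ⟨t, _, rfl⟩ := List.mem_map.mp hx
    simp only [Function.comp]
    have : t * a * c = t * (c * a) := by rw [mul_assoc, mul_comm a c]
    rw [this]
    exact hJ.2.2 t _ hca
  have hjc : j * c ∈ J := by rw [mul_comm]; exact hJ.2.2 c j hj
  exact hJ.2.1 _ hjc _ h3 h1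

end Multiring


open Multiring in
/-- Prime Ideal Theorem: an ideal disjoint from a multiplicative set is
contained in a prime ideal disjoint from that set. -/
theorem prime_ideal_theorem {A : Type u} [Multiring A] (I S : Set A)
    (hI : Multiring.IsIdeal I) (hS : Multiring.IsMultiplicative S)
    (hIS : I ∩ S = ∅) :
    ∃ p : Set A, Multiring.IsPrimeIdeal p ∧ I ⊆ p ∧ p ∩ S = ∅ := by
  classical
  set F : Set (Set A) := {J | IsIdeal J ∧ I ⊆ J ∧ J ∩ S = ∅} with hF
  have hIF : I ∈ F := ⟨hI, subset_rfl, hIS⟩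
  have hub : ∀ c ⊆ F, IsChain (· ⊆ ·) c → c.Nonempty → ∃ ub ∈ F, ∀ s ∈ c, s ⊆ ub := by
    intro c hcF hchain hcne
    refine ⟨⋃₀ c, ⟨⟨?_, ?_, ?_⟩, ?_, ?_⟩, fun s hs => Set.subset_sUnion_of_mem hs⟩
    · obtain ⟨t, ht⟩ := hcne
      obtain ⟨x, hx⟩ := (hcF ht).1.1
      exact ⟨x, t, ht, hx⟩
    · rintro x ⟨t₁, ht₁, hx⟩ y ⟨t₂, ht₂, hy⟩ z hz
      rcases hchain.total ht₁ ht₂ with h | h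
      · exact ⟨t₂, ht₂, (hcF ht₂).1.2.1 x (h hx) y hy hz⟩
      · exact ⟨t₁, ht₁, (hcF ht₁).1.2.1 x hx y (h hy) hz⟩
    · rintro d x ⟨t, ht, hx⟩
      exact ⟨t, ht, (hcF ht).1.2.2 d x hx⟩
    · obtain ⟨t, ht⟩ := hcne
      exact (hcF ht).2.1.trans (Set.subset_sUnion_of_mem ht)
    · ext x
      simp only [Set.mem_inter_iff, Set.mem_empty_iff_false, iff_false, not_and]
      rintro ⟨t, ht, hx⟩ hxS
      have : x ∈ t ∩ S := ⟨hx, hxS⟩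
      rw [(hcF ht).2.2] at this; exact this
  obtain ⟨J, hIJ, hJF, hJmax⟩ := zorn_subset_nonempty F hub I hIF
  · obtain ⟨hJid, hIJ', hJS⟩ := hJF
    have hdisj : ∀ x, x ∈ J → x ∈ S → False := by
      intro x h1 h2
      have : x ∈ J ∩ S := ⟨h1, h2⟩
      rw [hJS] at this; exact this
    have hone : (1 : A) ∉ J := fun h => hdisj 1 h hS.1
    refine ⟨J, ⟨hJid, hone, ?_⟩, hIJ', hJS⟩
    intro a b hab
    by_contra hcon
    push_neg at hcon
    obtain ⟨haJ, hbJ⟩ := hcon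
    -- extIdeal J a and extIdeal J b both meet S
    have key : ∀ c : A, c ∉ J → ∃ s ∈ S, s ∈ extIdeal J c := by
      intro c hcJ
      by_contra hno
      push_neg at hno
      have hE : extIdeal J c ∈ F := by
        refine ⟨extIdeal_isIdeal hJid c, hIJ'.trans (subset_extIdeal c), ?_⟩
        ext x
        simp only [Set.mem_inter_iff, Set.mem_empty_iff_false, iff_false, not_and]
        intro hx hxS
        exact hno x hxS hx
      have := hJmax hE (subset_extIdeal c)
      exact hcJ (this (mem_extIdeal_self hJid c))
    obtain ⟨s₁, hs₁S, hs₁⟩ := key a haJ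
    obtain ⟨s₂, hs₂S, hs₂⟩ := key b hbJ
    -- show s₂ * a ∈ J
    have h2a : s₂ * a ∈ J := extIdeal_mul_mem hJid hs₂ hab
    have h12 : s₁ * s₂ ∈ J := extIdeal_mul_mem hJid hs₁ h2a
    exact hdisj _ h12 (hS.2 s₁ hs₁S s₂ hs₂S)
end

section
/- Let A be a multiring and I an ideal of A. Then I is a prime ideal if and only if 1 ∉ I and the quotient multiring A/I is a multidomain. -/
universe u v

/-- An ideal `I` is prime iff `1 ∉ I` and the quotient multiring `A/I` is a
multidomain (its product is `[a][b] = [ab]`, its zero is `[0]`, and equality of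
classes is the relation `simI I`). -/
theorem prime_iff_quotient_multidomain {A : Type u} [Multiring A] (I : Set A)
    (hI : Multiring.IsIdeal I) :
    Multiring.IsPrimeIdeal I ↔
      ((1 : A) ∉ I ∧ ∀ a b : A,
        Multiring.simI I (a * b) 0 → Multiring.simI I a 0 ∨ Multiring.simI I b 0) := by
  open Multiring in
  have hneg0 : (-(0 : A)) = 0 := by
    have h0 : (0 : A) ∈ madd 0 0 := (mem_madd_zero 0 0).2 rfl
    have h1 := madd_rev_left 0 0 0 h0
    exact ((mem_madd_zero (0 : A) (-0)).1 h1).symm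
  have hsim : ∀ a : A, Multiring.simI I a 0 ↔ a ∈ I := by
    intro a
    constructor
    · rintro ⟨x, hx, hxI⟩
      rw [hneg0] at hx
      rwa [(mem_madd_zero a a).mpr rfl |> fun _ => (mem_madd_zero x a).1 hx] at hxI
    · intro ha
      exact ⟨a, by rw [hneg0]; exact (mem_madd_zero a a).2 rfl, ha⟩
  constructor
  · rintro ⟨_, h1, hp⟩
    refine ⟨h1, fun a b hab => ?_⟩
    rcases hp a b ((hsim _).1 hab) with h | h
    · exact Or.inl ((hsim a).2 h)
    · exact Or.inr ((hsim b).2 h)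
  · rintro ⟨h1, hd⟩
    refine ⟨hI, h1, fun a b hab => ?_⟩
    rcases hd a b ((hsim _).2 hab) with h | h
    · exact Or.inl ((hsim a).1 h)
    · exact Or.inr ((hsim b).1 h)
end

section
/- Let A be a multiring and I an ideal of A. Then I is a maximal ideal if and only if the quotient multiring A/I is a multifield. In particular, if A is a hyperring, then I is maximal if and only if A/I is a hyperfield. -/
universe u v

namespace Multiring

variable {A : Type u} [Multiring A]

lemma mneg_zero : (-0 : A) = 0 := by
  have h0 : (0:A) ∈ madd (0:A) 0 := (mem_madd_zero 0 0).2 rfl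
  exact ((mem_madd_zero 0 (-0)).1 (madd_rev_left 0 0 0 h0)).symm

lemma zero_mem_mneg (a : A) : (0:A) ∈ madd (-a) a :=
  madd_rev_left a a 0 ((mem_madd_zero a a).2 rfl)

lemma mneg_unique {u v : A} (h : (0:A) ∈ madd u v) : v = -u :=
  (mem_madd_zero v (-u)).1 (madd_rev_left 0 u v h)

lemma mneg_mneg (a : A) : -(-a) = a :=
  ((mem_madd_zero a (-(-a))).1 (madd_rev_left 0 (-a) a (zero_mem_mneg a))).symm

lemma mzero_mul (a : A) : (0:A) * a = 0 := by rw [mul_comm]; exact mul_zero' a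

lemma mneg_mul (a b : A) : (-a) * b = -(a * b) := by
  have h : (0:A) ∈ madd ((-a)*b) (a*b) := by
    have := madd_mul 0 (-a) a b (zero_mem_mneg a)
    rwa [mzero_mul] at this
  have := mneg_unique h
  rw [this, mneg_mneg]

lemma massoc' {a b c h x : A} (hh : h ∈ madd b c) (hx : x ∈ madd a h) :
    ∃ g ∈ madd a b, x ∈ madd g c := by
  rw [madd_comm] at hx
  obtain ⟨k, hk, hxk⟩ := madd_assoc b c a h x hh hx
  rw [madd_comm] at hxk
  obtain ⟨m, hm, hxm⟩ := madd_assoc c a b k x hk hxk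
  rw [madd_comm] at hxm
  exact ⟨m, hm, hxm⟩

lemma zero_mem_ideal {I : Set A} (hI : IsIdeal I) : (0:A) ∈ I := by
  obtain ⟨b, hb⟩ := hI.1
  have := hI.2.2 0 b hb
  rwa [mzero_mul] at this

lemma mneg_mem_ideal {I : Set A} (hI : IsIdeal I) {x : A} (hx : x ∈ I) : -x ∈ I := by
  have := hI.2.2 (-1) x hx
  rwa [mneg_mul, one_mul] at this

lemma simI_zero_iff {I : Set A} {a : A} : simI I a 0 ↔ a ∈ I := by
  constructor
  · rintro ⟨x, hx, hxI⟩
    rw [mneg_zero] at hx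
    rwa [(mem_madd_zero x a).1 hx] at hxI
  · intro ha
    exact ⟨a, by rw [mneg_zero]; exact (mem_madd_zero a a).2 rfl, ha⟩

lemma simI_symm {I : Set A} (hI : IsIdeal I) {p q : A} (h : simI I p q) : simI I q p := by
  obtain ⟨x, hx, hxI⟩ := h
  have hp : p ∈ madd x q := by
    have := madd_rev_right x p (-q) hx
    rwa [mneg_mneg] at this
  have hq : q ∈ madd (-x) p := madd_rev_left p x q hp
  have hnx : -x ∈ madd q (-p) := madd_rev_right q (-x) p hq
  exact ⟨-x, hnx, mneg_mem_ideal hI hxI⟩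

lemma medial {i1 z1 i2 z2 y1 y2 y : A} (h1 : y1 ∈ madd i1 z1) (h2 : y2 ∈ madd i2 z2)
    (hy : y ∈ madd y1 y2) :
    ∃ i ∈ madd i1 i2, ∃ z ∈ madd z1 z2, y ∈ madd i z := by
  obtain ⟨h, hh, hyh⟩ := madd_assoc i1 z1 y2 y1 y h1 hy
  rw [madd_comm] at hh
  obtain ⟨k, hk, hhk⟩ := madd_assoc i2 z2 z1 y2 h h2 hh
  obtain ⟨g, hg, hyg⟩ := massoc' hhk hyh
  rw [madd_comm] at hk
  exact ⟨g, hg, k, hk, hyg⟩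

lemma listSum_append_s3 {L1 L2 : List A} {z1 z2 z : A} (h1 : z1 ∈ listSum L1)
    (h2 : z2 ∈ listSum L2) (hz : z ∈ madd z1 z2) : z ∈ listSum (L1 ++ L2) := by
  induction L1 generalizing z1 z with
  | nil =>
      have hz1 : z1 = 0 := h1
      subst hz1
      rw [madd_comm] at hz
      have := (mem_madd_zero z z2).1 hz
      simpa [this] using h2
  | cons c L' ih =>
      obtain ⟨y, hy, hzy⟩ := h1
      obtain ⟨h, hh, hzh⟩ := madd_assoc c y z2 z1 z hzy hz
      exact ⟨h, ih hy hh, hzh⟩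

lemma listSum_mul {L : List A} {z : A} (h : z ∈ listSum L) (c : A) :
    z * c ∈ listSum (L.map (· * c)) := by
  induction L generalizing z with
  | nil =>
      have hz : z = 0 := h
      subst hz
      show (0:A) * c ∈ listSum ([] : List A)
      rw [mzero_mul]; rfl
  | cons e L' ih =>
      obtain ⟨y, hy, hzy⟩ := h
      exact ⟨y * c, ih hy, madd_mul z e y c hzy⟩

lemma listSum_to_qlistSum {I : Set A} (h0I : (0:A) ∈ I) {L : List A} {z : A}
    (hz : z ∈ listSum L) : ∀ i ∈ I, ∀ x ∈ madd z i, x ∈ qlistSumI I L := by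
  induction L generalizing z with
  | nil =>
      intro i hi x hx
      have hz0 : z = 0 := hz
      subst hz0
      rw [madd_comm] at hx
      have := (mem_madd_zero x i).1 hx
      subst this
      exact simI_zero_iff.2 hi
  | cons c L' ih =>
      intro i hi x hx
      obtain ⟨y, hy, hzy⟩ := hz
      obtain ⟨h, hh, hxh⟩ := madd_assoc c y i z x hzy hx
      exact ⟨y, ih hy 0 h0I y ((mem_madd_zero y y).2 rfl), i, hi, h, hh, hxh⟩

lemma qlistSum_subset {I J : Set A} (hJ : IsIdeal J) (hIJ : I ⊆ J) {L : List A}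
    (hL : ∀ c ∈ L, c ∈ J) : qlistSumI I L ⊆ J := by
  induction L with
  | nil =>
      intro x hx
      exact hIJ (simI_zero_iff.1 hx)
  | cons c L' ih =>
      rintro x ⟨y, hy, i, hi, w, hw, hx⟩
      have hyJ : y ∈ J := ih (fun d hd => hL d (List.mem_cons_of_mem c hd)) hy
      have hwJ : w ∈ J := hJ.2.1 y hyJ i (hIJ hi) hw
      exact hJ.2.1 c (hL c (List.mem_cons_self (a := c) (l := L'))) w hwJ hx

lemma hyper_collapse {I : Set A} (hI : IsIdeal I) (hH : IsHyperring A) (a : A)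
    {l : List A} {x : A} (hx : x ∈ qlistSumI I (l.map fun b => a * b)) :
    ∃ b : A, simI I x (a * b) := by
  induction l generalizing x with
  | nil =>
      refine ⟨0, ?_⟩
      rw [mul_zero']
      exact hx
  | cons c l' ih =>
      obtain ⟨y, hy, i, hi, w, hw, hxw⟩ := hx
      obtain ⟨b', u, hu, huI⟩ := ih hy
      have hy' : y ∈ madd u (a * b') := by
        have := madd_rev_right u y (-(a * b')) hu
        rwa [mneg_mneg] at this
      obtain ⟨h, hh, hwh⟩ := madd_assoc u (a * b') i y w hy' hw
      rw [madd_comm] at hxw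
      obtain ⟨h2, hh2, hxh2⟩ := madd_assoc u h (a * c) w x hwh hxw
      rw [madd_comm] at hh2
      obtain ⟨g, hg, hh2g⟩ := massoc' hh hh2
      rw [mul_comm a c, mul_comm a b'] at hg
      obtain ⟨e, he, hge⟩ := hH g c b' a hg
      rw [madd_comm] at hxh2
      obtain ⟨k, hk, hxk⟩ := madd_assoc g i u h2 x hh2g hxh2
      have hkI : k ∈ I := hI.2.1 i hi u huI hk
      have : k ∈ madd x (-g) := by
        have := madd_rev_left x g k hxk
        rwa [madd_comm] at this
      refine ⟨e, k, ?_, hkI⟩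
      rwa [hge, mul_comm e a] at this

end Multiring

/-- An ideal `I` is maximal iff the quotient multiring `A/I` is a multifield;
and, if `A` is a hyperring, `I` is maximal iff `A/I` is a hyperfield. -/
theorem maximal_iff_quotient_multifield {A : Type u} [Multiring A] (I : Set A)
    (hI : Multiring.IsIdeal I) :
    (Multiring.IsMaximalIdeal I ↔ Multiring.QuotIsMultifield I) ∧
    (Multiring.IsHyperring A →
      (Multiring.IsMaximalIdeal I ↔ Multiring.QuotIsHyperfield I)) := by
  have h0I : (0:A) ∈ I := Multiring.zero_mem_ideal hI
  have part1 : Multiring.IsMaximalIdeal I ↔ Multiring.QuotIsMultifield I := by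
    constructor
    · intro hM
      refine ⟨fun hs => hM.2.1 (Multiring.simI_zero_iff.1 hs), ?_⟩
      intro a ha
      have haI : a ∉ I := fun h => ha (Multiring.simI_zero_iff.2 h)
      set J : Set A := {y | ∃ i ∈ I, ∃ l : List A,
        ∃ z ∈ Multiring.listSum (l.map fun t => t * a), y ∈ Multiring.madd i z} with hJdef
      have hJideal : Multiring.IsIdeal J := by
        refine ⟨⟨0, 0, h0I, [], 0, rfl, (Multiring.mem_madd_zero 0 0).2 rfl⟩, ?_, ?_⟩
        · rintro y1 ⟨i1, hi1, l1, z1, hz1, hy1⟩ y2 ⟨i2, hi2, l2, z2, hz2, hy2⟩ y hy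
          obtain ⟨i, hi, z, hz, hyz⟩ := Multiring.medial hy1 hy2 hy
          refine ⟨i, hI.2.1 i1 hi1 i2 hi2 hi, l1 ++ l2, z, ?_, hyz⟩
          rw [List.map_append]
          exact Multiring.listSum_append_s3 hz1 hz2 hz
        · rintro c y ⟨i, hi, l, z, hz, hy⟩
          have h1 : y * c ∈ Multiring.madd (i * c) (z * c) :=
            Multiring.madd_mul y i z c hy
          have h2 : z * c ∈ Multiring.listSum ((l.map fun t => t * a).map (· * c)) :=
            Multiring.listSum_mul hz c
          have h3 : (l.map fun t => t * a).map (· * c)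
              = (l.map fun t => t * c).map fun t => t * a := by
            simp only [List.map_map]
            exact List.map_congr_left fun t _ => by
              simp only [Function.comp]; rw [mul_right_comm]
          rw [h3] at h2
          refine ⟨i * c, by rw [mul_comm]; exact hI.2.2 c i hi,
            l.map fun t => t * c, z * c, h2, by rwa [mul_comm c y]⟩
      have hIJ : I ⊆ J := fun i hi =>
        ⟨i, hi, [], 0, rfl, (Multiring.mem_madd_zero i i).2 rfl⟩
      have haJ : a ∈ J := by
        refine ⟨0, h0I, [1], a, ?_, ?_⟩
        · exact ⟨0, rfl, by show a ∈ Multiring.madd (1*a) 0; rw [one_mul]; exact (Multiring.mem_madd_zero a a).2 rfl⟩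
        · rw [Multiring.madd_comm]; exact (Multiring.mem_madd_zero a a).2 rfl
      have h1J : (1:A) ∈ J := by
        by_contra h1J
        exact haI (hM.2.2 J hJideal h1J hIJ ▸ haJ)
      obtain ⟨i, hi, l, z, hz, h1⟩ := h1J
      have hlne : l ≠ [] := by
        rintro rfl
        have hz0 : z = 0 := hz
        subst hz0
        exact hM.2.1 (((Multiring.mem_madd_zero 1 i).1 h1) ▸ hi)
      refine ⟨l, hlne, ?_⟩
      have hmap : (l.map fun b => a * b) = l.map fun t => t * a :=
        List.map_congr_left fun t _ => mul_comm a t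
      rw [hmap]
      rw [Multiring.madd_comm] at h1
      exact Multiring.listSum_to_qlistSum h0I hz i hi 1 h1
    · intro hQ
      refine ⟨hI, fun h1 => hQ.1 (Multiring.simI_zero_iff.2 h1), ?_⟩
      intro J hJ h1J hIJ
      refine Set.Subset.antisymm ?_ hIJ
      intro a haJ
      by_contra haI
      obtain ⟨l, _, h1⟩ := hQ.2 a fun hs => haI (Multiring.simI_zero_iff.1 hs)
      refine h1J (Multiring.qlistSum_subset hJ hIJ ?_ h1)
      intro c hc
      obtain ⟨b, _, rfl⟩ := List.mem_map.1 hc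
      rw [mul_comm]
      exact hJ.2.2 b a haJ
  refine ⟨part1, fun hH => ?_⟩
  constructor
  · intro hM
    have hQ := part1.1 hM
    refine ⟨hQ.1, ?_⟩
    intro a ha
    obtain ⟨l, _, h1⟩ := hQ.2 a ha
    obtain ⟨b, hb⟩ := Multiring.hyper_collapse hI hH a h1
    exact ⟨b, Multiring.simI_symm hI hb⟩
  · intro hQ
    refine part1.2 ⟨hQ.1, ?_⟩
    intro a ha
    obtain ⟨b, x, hx, hxI⟩ := hQ.2 a ha
    refine ⟨[b], by simp, ?_⟩
    refine ⟨0, Multiring.simI_zero_iff.2 h0I, -x, Multiring.mneg_mem_ideal hI hxI, -x,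
      by rw [Multiring.madd_comm]; exact (Multiring.mem_madd_zero (-x) (-x)).2 rfl, ?_⟩
    have h2 : a * b ∈ Multiring.madd x 1 := by
      have := Multiring.madd_rev_right x (a * b) (-1) hx
      rwa [Multiring.mneg_mneg] at this
    rw [Multiring.madd_comm] at h2
    exact Multiring.madd_rev_right (a*b) 1 x h2
end

section
/- Let A be a multiring and S, T ⊆ A multiplicative sets. Then S̄ = {x ∈ A : xs ∈ S for some s ∈ S} is a multiplicative set which is cancellative (i.e., if xs ∈ S̄ with s ∈ S̄ then x ∈ S̄), and the Marshall equivalence relations ∼_S and ∼_T on A coincide if and only if S̄ = T̄. In particular A/ₘS̄ = A/ₘS. -/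
universe u v

namespace MyAux

open Multiring

variable {A : Type u} [Multiring A]

lemma subset_mbar {S : Set A} (hS : IsMultiplicative S) : S ⊆ mbar S :=
  fun x hx => ⟨1, hS.1, by simpa using hx⟩

lemma mbar_mult {S : Set A} (hS : IsMultiplicative S) : IsMultiplicative (mbar S) := by
  refine ⟨subset_mbar hS hS.1, ?_⟩
  rintro s ⟨u, hu, hsu⟩ t ⟨v, hv, htv⟩
  refine ⟨u * v, hS.2 u hu v hv, ?_⟩
  have : s * t * (u * v) = (s * u) * (t * v) := by ac_rfl
  rw [this]; exact hS.2 _ hsu _ htv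

lemma simM_mbar {S : Set A} (hS : IsMultiplicative S) (a b : A) :
    simM (mbar S) a b ↔ simM S a b := by
  constructor
  · rintro ⟨s, ⟨u, hu, hsu⟩, t, ⟨v, hv, htv⟩, h⟩
    refine ⟨s * u * v, hS.2 _ hsu _ hv, t * v * u, hS.2 _ htv _ hu, ?_⟩
    have h1 : a * (s * u * v) = (a * s) * (u * v) := by ac_rfl
    have h2 : b * (t * v * u) = (b * t) * (u * v) := by ac_rfl
    rw [h1, h2, h]
  · rintro ⟨s, hs, t, ht, h⟩
    exact ⟨s, subset_mbar hS hs, t, subset_mbar hS ht, h⟩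

lemma simM_one_iff {S : Set A} (hS : IsMultiplicative S) (x : A) :
    simM S x 1 ↔ x ∈ mbar S := by
  constructor
  · rintro ⟨s, hs, t, ht, h⟩
    exact ⟨s, hs, by rw [h]; simpa using ht⟩
  · rintro ⟨s, hs, hxs⟩
    exact ⟨s, hs, x * s, hxs, by rw [one_mul]⟩

lemma qmemM_mbar {S : Set A} (hS : IsMultiplicative S) (a b c : A) :
    qmemM (mbar S) a b c ↔ qmemM S a b c := by
  constructor
  · rintro ⟨s, ⟨u, hu, hsu⟩, t, ⟨v, hv, htv⟩, w, ⟨z, hz, hwz⟩, h⟩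
    have h' := madd_mul _ _ _ (u * v * z) h
    refine ⟨s * (u * v * z), ?_, t * (u * v * z), ?_, w * (u * v * z), ?_, ?_⟩
    · have : s * (u * v * z) = (s * u) * (v * z) := by ac_rfl
      rw [this]; exact hS.2 _ hsu _ (hS.2 _ hv _ hz)
    · have : t * (u * v * z) = (t * v) * (u * z) := by ac_rfl
      rw [this]; exact hS.2 _ htv _ (hS.2 _ hu _ hz)
    · have : w * (u * v * z) = (w * z) * (u * v) := by ac_rfl
      rw [this]; exact hS.2 _ hwz _ (hS.2 _ hu _ hv)
    · have e1 : a * (s * (u * v * z)) = a * s * (u * v * z) := by ac_rfl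
      have e2 : b * (t * (u * v * z)) = b * t * (u * v * z) := by ac_rfl
      have e3 : c * (w * (u * v * z)) = c * w * (u * v * z) := by ac_rfl
      rw [e1, e2, e3]; exact h'
  · rintro ⟨s, hs, t, ht, w, hw, h⟩
    exact ⟨s, subset_mbar hS hs, t, subset_mbar hS ht, w, subset_mbar hS hw, h⟩

end MyAux

/-- `S̄` is a cancellative multiplicative set, the Marshall equivalences of `S`
and `T` coincide iff `S̄ = T̄`, and `A/ₘS̄ = A/ₘS` (same classes and same
multivalued sum). -/
theorem mbar_cancellative_and_sim_eq {A : Type u} [Multiring A] (S T : Set A)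
    (hS : Multiring.IsMultiplicative S) (hT : Multiring.IsMultiplicative T) :
    Multiring.IsMultiplicative (Multiring.mbar S) ∧
    (∀ x s : A, s ∈ Multiring.mbar S → x * s ∈ Multiring.mbar S →
      x ∈ Multiring.mbar S) ∧
    ((∀ a b : A, Multiring.simM S a b ↔ Multiring.simM T a b) ↔
      Multiring.mbar S = Multiring.mbar T) ∧
    (∀ a b : A, Multiring.simM (Multiring.mbar S) a b ↔ Multiring.simM S a b) ∧
    (∀ a b c : A, Multiring.qmemM (Multiring.mbar S) a b c ↔
      Multiring.qmemM S a b c) := by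
    open Multiring MyAux in
  refine ⟨mbar_mult hS, ?_, ?_, simM_mbar hS, qmemM_mbar hS⟩
  · rintro x s ⟨u, hu, hsu⟩ ⟨v, hv, hxsv⟩
    refine ⟨s * u * v, hS.2 _ hsu _ hv, ?_⟩
    have : x * (s * u * v) = (x * s * v) * u := by ac_rfl
    rw [this]; exact hS.2 _ hxsv _ hu
  · constructor
    · intro h
      ext x
      rw [← simM_one_iff hS, ← simM_one_iff hT, h]
    · intro h a b
      rw [← simM_mbar hS, ← simM_mbar hT, h]
end

section
/- Let A be a hyperring and S ⊆ A a multiplicative set. Then the Marshall quotient A/ₘS is a hyperring. -/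
universe u v

/-- If `A` is a hyperring and `S` a multiplicative set, then the Marshall
quotient `A/ₘS` is a hyperring: whenever `[x] ∈ [b][d] + [c][d]` there is `a`
with `[a] ∈ [b] + [c]` and `[x] = [a][d]`. -/
theorem marshall_quotient_isHyperring {A : Type u} [Multiring A]
    (hA : Multiring.IsHyperring A) (S : Set A)
    (hS : Multiring.IsMultiplicative S) :
    ∀ x b c d : A, Multiring.qmemM S x (b * d) (c * d) →
      ∃ a : A, Multiring.qmemM S a b c ∧ Multiring.simM S x (a * d) := by
  rintro x b c d ⟨s, hs, t, ht, u, hu, h⟩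
  have h2 := Multiring.madd_mul _ _ _ (t * u) h
  have e1 : b * d * t * (t * u) = b * (t * (t * u)) * d := by ac_rfl
  have e2 : c * d * u * (t * u) = c * (u * (t * u)) * d := by ac_rfl
  rw [e1, e2] at h2
  obtain ⟨a, ha, hx⟩ := hA _ _ _ _ h2
  refine ⟨a, ⟨1, hS.1, t * (t * u), hS.2 t ht _ (hS.2 t ht u hu),
    u * (t * u), hS.2 u hu _ (hS.2 t ht u hu), by rwa [mul_one]⟩,
    s * (t * u), hS.2 s hs _ (hS.2 t ht u hu), 1, hS.1, ?_⟩
  rw [mul_one, ← mul_assoc, hx]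
end

section
/- Let F be a hyperfield. Then F is a real reduced multiring if and only if: 1 ≠ 0, a² = 1 for every nonzero a ∈ F, and 1+1 = {1}. -/
universe u v

/-- A hyperfield `F` is a real reduced multiring iff `1 ≠ 0`, `a² = 1` for all
nonzero `a`, and `1 + 1 = {1}`. -/
theorem hyperfield_realReduced_iff {F : Type u} [Multiring F]
    (hF : Multiring.IsHyperfield F) :
    Multiring.IsRealReduced F ↔
      ((1 : F) ≠ 0 ∧ (∀ a : F, a ≠ 0 → a * a = 1) ∧
        Multiring.madd (1 : F) 1 = {1}) := by

  open Multiring in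
  obtain ⟨hHR, h10, hinv⟩ := hF
  constructor
  · rintro ⟨hsr, hcube, habsorb, hsqsum⟩
    refine ⟨h10, ?_, ?_⟩
    · intro a ha
      obtain ⟨b, hb⟩ := hinv a ha
      have h1 : a * a = a * a * (a * b) := by rw [hb, mul_one]
      rw [h1, ← mul_assoc, hcube a, hb]
    · simpa using habsorb 1 1
  · rintro ⟨h10', hsq, h11⟩
    have zmul : ∀ a : F, (0:F) * a = 0 := fun a => by
      rw [mul_comm]; exact mul_zero' a
    have maddz : ∀ a : F, madd a (0:F) = {a} := fun a => by
      ext x; simpa using mem_madd_zero x a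
    have maddz' : ∀ a : F, madd (0:F) a = {a} := fun a => by
      rw [madd_comm]; exact maddz a
    have maddaa : ∀ a : F, a ≠ 0 → madd a a = {a} := by
      intro a ha
      ext x
      simp only [Set.mem_singleton_iff]
      constructor
      · intro hx
        have hx' : x ∈ madd (1*a) (1*a) := by simpa using hx
        obtain ⟨c, hc, rfl⟩ := hHR x 1 1 a hx'
        rw [h11, Set.mem_singleton_iff] at hc
        simp [hc]
      · intro hx
        rw [hx]
        have h1 : (1:F) ∈ madd 1 1 := by rw [h11]; exact Set.mem_singleton _
        simpa using madd_mul 1 1 1 a h1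
    have hcube : ∀ a : F, a * a * a = a := by
      intro a
      by_cases h : a = 0
      · simp [h, mul_zero', zmul]
      · rw [hsq a h, one_mul]
    have key : ∀ l : List F, ∀ x ∈ listSum (l.map fun a => a * a), x = 0 ∨ x = 1 := by
      intro l
      induction l with
      | nil =>
        intro x hx
        left
        simpa [listSum] using hx
      | cons a l ih =>
        intro x hx
        simp only [List.map_cons, listSum, Set.mem_setOf_eq] at hx
        obtain ⟨y, hy, hxy⟩ := hx
        have ha : a * a = 0 ∨ a * a = 1 := by
          by_cases h : a = 0
          · left; simp [h, zmul]
          · right; exact hsq a h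
        rcases ha with ha | ha <;> rcases ih y hy with hy' | hy' <;>
          rw [ha, hy'] at hxy
        · left; rwa [maddz, Set.mem_singleton_iff] at hxy
        · right; rwa [maddz', Set.mem_singleton_iff] at hxy
        · right; rwa [maddz, Set.mem_singleton_iff] at hxy
        · right; rwa [h11, Set.mem_singleton_iff] at hxy
    have h01 : (0:F) ∈ madd (-1 : F) 1 := by
      have h1 : (1:F) ∈ madd 1 0 := (mem_madd_zero 1 1).2 rfl
      exact madd_rev_left 1 1 0 h1
    refine ⟨?_, hcube, ?_, ?_⟩
    · rintro ⟨l, hl, hmem⟩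
      rcases key _ _ hmem with h | h
      · rw [h, maddz', Set.mem_singleton_iff] at h01
        exact h10 h01.symm
      · rw [h, h11, Set.mem_singleton_iff] at h01
        exact h10 h01.symm
    · intro a b
      by_cases ha : a = 0
      · have : a * b * b = 0 := by rw [ha, zmul, zmul]
        rw [this, maddz, ha]
      · by_cases hb : b = 0
        · have : a * b * b = 0 := by simp [hb, mul_zero']
          rw [this, maddz]
        · have : a * b * b = a := by rw [mul_assoc, hsq b hb, mul_one]
          rw [this, maddaa a ha]
    · intro a b
      by_cases ha : a = 0 <;> by_cases hb : b = 0
      · exact ⟨0, by rw [ha, hb, zmul, maddz]⟩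
      · exact ⟨1, by rw [ha, zmul, hsq b hb, maddz']⟩
      · exact ⟨1, by rw [hb, zmul, hsq a ha, maddz]⟩
      · exact ⟨1, by rw [hsq a ha, hsq b hb, h11]⟩
end
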